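/- Let G be a group, N a normal subgroup containing the commutator subgroup [G,G], and χ : N → ℂˣ a group homomorphism invariant under conjugation by G, i.e., χ(gng⁻¹) = χ(n) for all g ∈ G, n ∈ N. Then the map B(g,h) := χ(ghg⁻¹h⁻¹) descends to a well-defined map on (G/N) × (G/N), is bimultiplicative (B(g₁g₂, h) = B(g₁,h)B(g₂,h) and B(g, h₁h₂) = B(g,h₁)B(g,h₂)), and is alternating: B(g,g) = 1 and B(g,h) = B(h,g)⁻¹. -/
import Mathlib


/-- Let `N` be a normal subgroup of `G` containing the commutator subgroup, and `χ` a
`G`-conjugation-invariant character on `N`.  Then `B(g,h) = χ([g,h])` descends to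
`(G/N) × (G/N)`, is bimultiplicative, and is alternating. -/
theorem commutator_pairing_symplectic
    (G : Type*) [Group G] (N : Subgroup G) [N.Normal] (hN : commutator G ≤ N)
    (χ : G → ℂˣ)
    (hχmul : ∀ n m : G, n ∈ N → m ∈ N → χ (n * m) = χ n * χ m)
    (hχconj : ∀ (g n : G), n ∈ N → χ (g * n * g⁻¹) = χ n) :
    (∀ g g' h h' : G, g⁻¹ * g' ∈ N → h⁻¹ * h' ∈ N →
      χ (g * h * g⁻¹ * h⁻¹) = χ (g' * h' * g'⁻¹ * h'⁻¹)) ∧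
    (∀ g₁ g₂ h : G,
      χ ((g₁ * g₂) * h * (g₁ * g₂)⁻¹ * h⁻¹) =
        χ (g₁ * h * g₁⁻¹ * h⁻¹) * χ (g₂ * h * g₂⁻¹ * h⁻¹)) ∧
    (∀ g h₁ h₂ : G,
      χ (g * (h₁ * h₂) * g⁻¹ * (h₁ * h₂)⁻¹) =
        χ (g * h₁ * g⁻¹ * h₁⁻¹) * χ (g * h₂ * g⁻¹ * h₂⁻¹)) ∧
    (∀ g : G, χ (g * g * g⁻¹ * g⁻¹) = 1) ∧
    (∀ g h : G, χ (g * h * g⁻¹ * h⁻¹) = (χ (h * g * h⁻¹ * g⁻¹))⁻¹) := by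
  have memN : ∀ g h : G, g * h * g⁻¹ * h⁻¹ ∈ N := fun g h =>
    hN (Subgroup.commutator_mem_commutator (Subgroup.mem_top g) (Subgroup.mem_top h))
  have χ1 : χ 1 = 1 := by
    have h := hχmul 1 1 N.one_mem N.one_mem
    rw [one_mul] at h
    exact (left_eq_mul.mp h)
  have χinv : ∀ n : G, n ∈ N → χ n⁻¹ = (χ n)⁻¹ := by
    intro n hn
    have h := hχmul n n⁻¹ hn (N.inv_mem hn)
    rw [mul_inv_cancel, χ1] at h
    exact (inv_eq_of_mul_eq_one_right h.symm).symm
  have Bmul1 : ∀ g₁ g₂ h : G,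
      χ ((g₁ * g₂) * h * (g₁ * g₂)⁻¹ * h⁻¹) =
        χ (g₁ * h * g₁⁻¹ * h⁻¹) * χ (g₂ * h * g₂⁻¹ * h⁻¹) := by
    intro g₁ g₂ h
    have e : (g₁ * g₂) * h * (g₁ * g₂)⁻¹ * h⁻¹ =
        (g₁ * (g₂ * h * g₂⁻¹ * h⁻¹) * g₁⁻¹) * (g₁ * h * g₁⁻¹ * h⁻¹) := by group
    rw [e, hχmul _ _ (Subgroup.Normal.conj_mem ‹N.Normal› _ (memN g₂ h) g₁) (memN g₁ h),
      hχconj _ _ (memN g₂ h), mul_comm]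
  have Bmul2 : ∀ g h₁ h₂ : G,
      χ (g * (h₁ * h₂) * g⁻¹ * (h₁ * h₂)⁻¹) =
        χ (g * h₁ * g⁻¹ * h₁⁻¹) * χ (g * h₂ * g⁻¹ * h₂⁻¹) := by
    intro g h₁ h₂
    have e : g * (h₁ * h₂) * g⁻¹ * (h₁ * h₂)⁻¹ =
        (g * h₁ * g⁻¹ * h₁⁻¹) * (h₁ * (g * h₂ * g⁻¹ * h₂⁻¹) * h₁⁻¹) := by group
    rw [e, hχmul _ _ (memN g h₁) (Subgroup.Normal.conj_mem ‹N.Normal› _ (memN g h₂) h₁),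
      hχconj _ _ (memN g h₂)]
  have Bleft : ∀ n h : G, n ∈ N → χ (n * h * n⁻¹ * h⁻¹) = 1 := by
    intro n h hn
    have e : n * h * n⁻¹ * h⁻¹ = n * (h * n⁻¹ * h⁻¹) := by group
    rw [e, hχmul _ _ hn (Subgroup.Normal.conj_mem ‹N.Normal› _ (N.inv_mem hn) h),
      hχconj _ _ (N.inv_mem hn), χinv _ hn, mul_inv_cancel]
  have Bright : ∀ g m : G, m ∈ N → χ (g * m * g⁻¹ * m⁻¹) = 1 := by
    intro g m hm
    rw [hχmul _ _ (Subgroup.Normal.conj_mem ‹N.Normal› _ hm g) (N.inv_mem hm),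
      hχconj _ _ hm, χinv _ hm, mul_inv_cancel]
  refine ⟨?_, Bmul1, Bmul2, ?_, ?_⟩
  · intro g g' h h' hg hh
    have hg' : g' = g * (g⁻¹ * g') := by group
    have hh' : h' = h * (h⁻¹ * h') := by group
    calc χ (g * h * g⁻¹ * h⁻¹)
        = χ (g * h * g⁻¹ * h⁻¹) * χ (g * (h⁻¹ * h') * g⁻¹ * (h⁻¹ * h')⁻¹) := by
          rw [Bright _ _ hh, mul_one]
      _ = χ (g * h' * g⁻¹ * h'⁻¹) := by rw [← Bmul2, ← hh']
      _ = χ (g * h' * g⁻¹ * h'⁻¹) * χ ((g⁻¹ * g') * h' * (g⁻¹ * g')⁻¹ * h'⁻¹) := by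
          rw [Bleft _ _ hg, mul_one]
      _ = χ (g' * h' * g'⁻¹ * h'⁻¹) := by rw [← Bmul1, ← hg']
  · intro g
    have e : g * g * g⁻¹ * g⁻¹ = 1 := by group
    rw [e, χ1]
  · intro g h
    have e : g * h * g⁻¹ * h⁻¹ = (h * g * h⁻¹ * g⁻¹)⁻¹ := by group
    rw [e, χinv _ (memN h g)]
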